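/- Let d, k ≥ 1 be integers, ε ∈ [0, 2^{-kd}], and let μ be a dyadic mean (k,η,ε)-porous Borel probability measure on [0,1)^d. Let R* be the tree of cubes constructed from μ as described (with any admissible choice of small-measure cubes), and for x ∈ [0,1)^d and i ≥ 0 set M̄_i(x) = log( ℓ(R_i(x)) / ℓ(R_{i+1}(x)) ), where ℓ denotes side length. Then for μ-almost every x, lim_{n→∞} (1/n)·Σ_{i ∈ {0,…,n−1}, R_i(x) ∈ 𝒫} ( λ(R_i(x)) − M̄_i(x) ) = 0. -/

import Mathlib

open MeasureTheory Filter Metric Set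
open scoped ENNReal NNReal

/-- The half-open dyadic cube of side `2^{-n}` containing `x`. -/
def dyadicCube (d n : ℕ) (x : EuclideanSpace ℝ (Fin d)) : Set (EuclideanSpace ℝ (Fin d)) :=
  {y | ∀ j : Fin d, ⌊(2 : ℝ) ^ n * y j⌋ = ⌊(2 : ℝ) ^ n * x j⌋}

/-- `por₂(μ,x,n,ε) ≤ k`: there is `1 ≤ j ≤ k` and a dyadic subcube `R` of `D_n(x)`,
`j` levels below, with `μ(R) ≤ ε·μ(D_n(x))`. -/
def por2Le {d : ℕ} (μ : Measure (EuclideanSpace ℝ (Fin d)))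
    (x : EuclideanSpace ℝ (Fin d)) (n k : ℕ) (ε : ℝ) : Prop :=
  ∃ j : ℕ, 1 ≤ j ∧ j ≤ k ∧ ∃ y ∈ dyadicCube d n x,
    μ (dyadicCube d (n + j) y) ≤ ENNReal.ofReal ε * μ (dyadicCube d n x)

/-- `μ` is dyadic mean `(k,η,ε)`-porous: for `μ`-a.e. `x`,
`liminf_n (1/n)·#{i < n : por₂(μ,x,i,ε) ≤ k} ≥ η`. -/
def DyadicMeanPorousWith {d : ℕ} (μ : Measure (EuclideanSpace ℝ (Fin d)))
    (k : ℕ) (η ε : ℝ) : Prop :=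
  ∀ᵐ x ∂μ, η ≤ Filter.liminf
    (fun n : ℕ => (Set.ncard {i : ℕ | i < n ∧ por2Le μ x i k ε} : ℝ) / n) Filter.atTop

/-- `μ` is dyadic mean `(k,η)`-porous: dyadic mean `(k,η,ε)`-porous for all `ε > 0`. -/
def DyadicMeanPorous {d : ℕ} (μ : Measure (EuclideanSpace ℝ (Fin d))) (k : ℕ) (η : ℝ) : Prop :=
  ∀ ε > 0, DyadicMeanPorousWith μ k η ε

/-- The unit cube `[0,1)^d`. -/
def unitCube (d : ℕ) : Set (EuclideanSpace ℝ (Fin d)) :=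
  {x | ∀ j : Fin d, 0 ≤ x j ∧ x j < 1}

/-- The dyadic cube `D_n(x)` is porous: some dyadic subcube `k` levels below has
`μ`-measure at most `ε·μ(D_n(x))`. -/
def PorousCube {d : ℕ} (μ : Measure (EuclideanSpace ℝ (Fin d))) (ε : ℝ) (k n : ℕ)
    (x : EuclideanSpace ℝ (Fin d)) : Prop :=
  ∃ y ∈ dyadicCube d n x, μ (dyadicCube d (n + k) y) ≤ ENNReal.ofReal ε * μ (dyadicCube d n x)

/-- An admissible choice of small-measure subcubes: for every porous dyadic cube `D_n(x)`,
`c n x` marks a subcube `R = D_{n+k}(c n x) ⊆ D_n(x)` with `μ(R) ≤ ε·μ(D_n(x))`; the choice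
only depends on the cube `D_n(x)`. -/
structure AdmissibleChoice {d : ℕ} (μ : Measure (EuclideanSpace ℝ (Fin d))) (ε : ℝ)
    (k : ℕ) where
  c : ℕ → EuclideanSpace ℝ (Fin d) → EuclideanSpace ℝ (Fin d)
  mem : ∀ n x, PorousCube μ ε k n x → c n x ∈ dyadicCube d n x
  small : ∀ n x, PorousCube μ ε k n x →
    μ (dyadicCube d (n + k) (c n x)) ≤ ENNReal.ofReal ε * μ (dyadicCube d n x)
  compat : ∀ n x y, y ∈ dyadicCube d n x → c n y = c n x

open scoped Classical in
/-- The dyadic level of the offspring cube of the tree `R*` containing `y`, when the current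
node is the dyadic cube `D_m(y)`: if `D_m(y)` is not porous, subdivide into the dyadic cubes
of the next level; if it is porous with chosen small cube `R = D_{m+k}(c m y)`, the offspring
containing `y` is `R` itself if `y ∈ R`, and otherwise the first dyadic ancestor cube of `y`
below `D_m(y)` that does not contain `R`. -/
noncomputable def childLevel {d : ℕ} (μ : Measure (EuclideanSpace ℝ (Fin d))) (ε : ℝ)
    (k : ℕ) (C : AdmissibleChoice μ ε k) (m : ℕ) (y : EuclideanSpace ℝ (Fin d)) : ℕ :=
  if PorousCube μ ε k m y then
    (if C.c m y ∈ dyadicCube d (m + k) y then m + k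
     else m + sInf {j : ℕ | 1 ≤ j ∧ C.c m y ∉ dyadicCube d (m + j) y})
  else m + 1

/-- The dyadic level `M_n(x)` of the tree node `R_n(x)`, so that `R_n(x) = D_{M_n(x)}(x)`. -/
noncomputable def levelSeq {d : ℕ} (μ : Measure (EuclideanSpace ℝ (Fin d))) (ε : ℝ)
    (k : ℕ) (C : AdmissibleChoice μ ε k) (x : EuclideanSpace ℝ (Fin d)) : ℕ → ℕ
  | 0 => 0
  | n + 1 => childLevel μ ε k C (levelSeq μ ε k C x n) x

/-- The Lyapunov exponent `λ(Q) = Σ_{S ∈ R(Q)} μ^Q(S)·log(ℓ(Q)/ℓ(S))` of a porous node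
`Q = D_m(x)` of the tree, computed from the chain of dyadic ancestors
`Q = A_0 ⊇ A_1 ⊇ … ⊇ A_k = R` of the chosen small cube `R = D_{m+k}(c m x)`:
`λ(Q) = (log 2/μ(Q))·(k·μ(A_k) + Σ_{j=1}^k j·(μ(A_{j−1}) − μ(A_j)))`. -/
noncomputable def lyapPorous {d : ℕ} (μ : Measure (EuclideanSpace ℝ (Fin d))) (ε : ℝ)
    (k : ℕ) (C : AdmissibleChoice μ ε k) (m : ℕ) (x : EuclideanSpace ℝ (Fin d)) : ℝ :=
  (Real.log 2 / (μ (dyadicCube d m x)).toReal) *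
    ((k : ℝ) * (μ (dyadicCube d (m + k) (C.c m x))).toReal +
      ∑ j ∈ Finset.range k, ((j : ℝ) + 1) *
        ((μ (dyadicCube d (m + j) (C.c m x))).toReal
          - (μ (dyadicCube d (m + j + 1) (C.c m x))).toReal))

namespace S16

lemma floor_half (u : ℝ) : ⌊u / 2⌋ = ⌊((⌊u⌋ : ℝ)) / 2⌋ := by
  have hf0 := Int.fract_nonneg u
  have hf1 := Int.fract_lt_one u
  have hu : u = (⌊u⌋ : ℝ) + Int.fract u := (Int.floor_add_fract u).symm
  set f := Int.fract u with hfdef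
  clear_value f
  rcases Int.even_or_odd ⌊u⌋ with ⟨a, ha⟩ | ⟨a, ha⟩
  · have h1 : u / 2 = (a : ℝ) + f / 2 := by rw [hu, ha]; push_cast; ring
    have h2 : ((⌊u⌋ : ℝ)) / 2 = (a : ℝ) + 0 := by rw [ha]; push_cast; ring
    rw [h1, h2, Int.floor_intCast_add, Int.floor_intCast_add]
    congr 1
    rw [Int.floor_zero, Int.floor_eq_zero_iff, Set.mem_Ico]
    exact ⟨by positivity, by linarith⟩
  · have h1 : u / 2 = (a : ℝ) + (1 + f) / 2 := by rw [hu, ha]; push_cast; ring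
    have h2 : ((⌊u⌋ : ℝ)) / 2 = (a : ℝ) + 1 / 2 := by rw [ha]; push_cast; ring
    rw [h1, h2, Int.floor_intCast_add, Int.floor_intCast_add]
    congr 1
    have h3 : ⌊(1 : ℝ) / 2⌋ = 0 := by norm_num
    rw [h3, Int.floor_eq_zero_iff, Set.mem_Ico]
    exact ⟨by linarith, by linarith⟩

variable {d : ℕ}

lemma mem_cube_self (n : ℕ) (x : EuclideanSpace ℝ (Fin d)) : x ∈ dyadicCube d n x :=
  fun _ => rfl

lemma mem_cube_comm {n : ℕ} {x y : EuclideanSpace ℝ (Fin d)} :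
    y ∈ dyadicCube d n x ↔ x ∈ dyadicCube d n y :=
  ⟨fun h j => (h j).symm, fun h j => (h j).symm⟩

lemma cube_eq_of_mem {n : ℕ} {x y : EuclideanSpace ℝ (Fin d)} (h : y ∈ dyadicCube d n x) :
    dyadicCube d n y = dyadicCube d n x := by
  ext z; exact ⟨fun hz j => (hz j).trans (h j), fun hz j => (hz j).trans (h j).symm⟩

lemma cube_subset_succ (n : ℕ) (x : EuclideanSpace ℝ (Fin d)) :
    dyadicCube d (n + 1) x ⊆ dyadicCube d n x := by
  intro y hy j
  have h1 : (2 : ℝ) ^ n * y j = ((2 : ℝ) ^ (n + 1) * y j) / 2 := by ring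
  have h2 : (2 : ℝ) ^ n * x j = ((2 : ℝ) ^ (n + 1) * x j) / 2 := by ring
  rw [h1, h2, floor_half, hy j, ← floor_half]

lemma cube_subset {m n : ℕ} (h : m ≤ n) (x : EuclideanSpace ℝ (Fin d)) :
    dyadicCube d n x ⊆ dyadicCube d m x := by
  induction n with
  | zero => simp_all
  | succ n ih =>
    rcases Nat.lt_or_ge m (n + 1) with h' | h'
    · exact (cube_subset_succ n x).trans (ih (Nat.lt_succ_iff.mp h'))
    · have : m = n + 1 := le_antisymm h h'
      subst this; exact fun y hy => hy

lemma measurableSet_cube (n : ℕ) (x : EuclideanSpace ℝ (Fin d)) :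
    MeasurableSet (dyadicCube d n x) := by
  have : dyadicCube d n x =
      ⋂ j : Fin d, {y : EuclideanSpace ℝ (Fin d) | ⌊(2 : ℝ) ^ n * y j⌋ = ⌊(2 : ℝ) ^ n * x j⌋} := by
    ext z; simp [dyadicCube, Set.mem_iInter]
  rw [this]
  refine MeasurableSet.iInter fun j => ?_
  have hm : Measurable fun y : EuclideanSpace ℝ (Fin d) => ⌊(2 : ℝ) ^ n * y j⌋ := by
    apply Int.measurable_floor.comp
    exact (measurable_const.mul ((by fun_prop)))
  exact hm (measurableSet_singleton _)

end S16

namespace S16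
section
variable {d : ℕ} {μ : Measure (EuclideanSpace ℝ (Fin d))} {ε : ℝ} {k : ℕ}
  (C : AdmissibleChoice μ ε k)

lemma porous_congr {m : ℕ} {x y : EuclideanSpace ℝ (Fin d)} (h : y ∈ dyadicCube d m x) :
    PorousCube μ ε k m y ↔ PorousCube μ ε k m x := by
  unfold PorousCube; rw [cube_eq_of_mem h]

lemma childLevel_lb (hk : 1 ≤ k) (m : ℕ) (x : EuclideanSpace ℝ (Fin d)) :
    m + 1 ≤ childLevel μ ε k C m x := by
  unfold childLevel
  split_ifs with hp hmem
  · exact Nat.add_le_add_left hk m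
  · have hkS : k ∈ {j : ℕ | 1 ≤ j ∧ C.c m x ∉ dyadicCube d (m + j) x} := ⟨hk, hmem⟩
    have := Nat.sInf_mem (⟨k, hkS⟩ :
      {j : ℕ | 1 ≤ j ∧ C.c m x ∉ dyadicCube d (m + j) x}.Nonempty)
    exact Nat.add_le_add_left this.1 m
  · exact le_refl _

lemma childLevel_ub (hk : 1 ≤ k) (m : ℕ) (x : EuclideanSpace ℝ (Fin d)) :
    childLevel μ ε k C m x ≤ m + k := by
  unfold childLevel
  split_ifs with hp hmem
  · exact le_refl _
  · have hkS : k ∈ {j : ℕ | 1 ≤ j ∧ C.c m x ∉ dyadicCube d (m + j) x} := ⟨hk, hmem⟩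
    exact Nat.add_le_add_left (Nat.sInf_le hkS) m
  · exact Nat.add_le_add_left hk m

lemma childLevel_congr (hk : 1 ≤ k) {m : ℕ} {x y : EuclideanSpace ℝ (Fin d)}
    (h : y ∈ dyadicCube d (childLevel μ ε k C m x) x) :
    childLevel μ ε k C m y = childLevel μ ε k C m x := by
  have hym : y ∈ dyadicCube d m x :=
    cube_subset (le_trans (Nat.le_add_right m 1) (childLevel_lb C hk m x)) x h
  have hc : C.c m y = C.c m x := C.compat m x y hym
  by_cases hp : PorousCube μ ε k m x
  · have hpy : PorousCube μ ε k m y := (porous_congr hym).mpr hp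
    by_cases hmem : C.c m x ∈ dyadicCube d (m + k) x
    · have hx : childLevel μ ε k C m x = m + k := by
        unfold childLevel; rw [if_pos hp, if_pos hmem]
      rw [hx] at h
      have hcy : C.c m y ∈ dyadicCube d (m + k) y := by
        rw [hc, cube_eq_of_mem h]; exact hmem
      unfold childLevel; rw [if_pos hpy, if_pos hcy, if_pos hp, if_pos hmem]
    · set S : Set ℕ := {j : ℕ | 1 ≤ j ∧ C.c m x ∉ dyadicCube d (m + j) x} with hSdef
      have hkS : k ∈ S := ⟨hk, hmem⟩
      set j₀ := sInf S with hj₀def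
      have hj₀S : j₀ ∈ S := Nat.sInf_mem ⟨k, hkS⟩
      have hj₀k : j₀ ≤ k := Nat.sInf_le hkS
      have hx : childLevel μ ε k C m x = m + j₀ := by
        unfold childLevel; rw [if_pos hp, if_neg hmem]
      rw [hx] at h
      have key : ∀ j ≤ j₀, dyadicCube d (m + j) y = dyadicCube d (m + j) x := fun j hj =>
        cube_eq_of_mem (cube_subset (Nat.add_le_add_left hj m) x h)
      have hcy : C.c m y ∉ dyadicCube d (m + k) y := by
        intro hcon
        exact hj₀S.2 (by
          rw [← key j₀ le_rfl, ← hc]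
          exact cube_subset (Nat.add_le_add_left hj₀k m) y hcon)
      set Sy : Set ℕ := {j : ℕ | 1 ≤ j ∧ C.c m y ∉ dyadicCube d (m + j) y} with hSydef
      have hkSy : k ∈ Sy := ⟨hk, hcy⟩
      have hy' : childLevel μ ε k C m y = m + sInf Sy := by
        unfold childLevel; rw [if_pos hpy, if_neg hcy]
      rw [hy', hx]
      congr 1
      have h1 : sInf Sy ≤ j₀ := Nat.sInf_le ⟨hj₀S.1, by rw [hc, key j₀ le_rfl]; exact hj₀S.2⟩
      have h2 : j₀ ≤ sInf Sy := by
        by_contra hcon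
        push_neg at hcon
        have hj₁Sy : sInf Sy ∈ Sy := Nat.sInf_mem ⟨k, hkSy⟩
        have hnot : sInf Sy ∉ S := Nat.notMem_of_lt_sInf hcon
        have hmem' : C.c m x ∈ dyadicCube d (m + sInf Sy) x := by
          by_contra hcon2
          exact hnot ⟨hj₁Sy.1, hcon2⟩
        exact hj₁Sy.2 (by rw [hc, key (sInf Sy) (le_of_lt hcon)]; exact hmem')
      exact le_antisymm h1 h2
  · have hpy : ¬ PorousCube μ ε k m y := fun h' => hp ((porous_congr hym).mp h')
    unfold childLevel; rw [if_neg hpy, if_neg hp]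

lemma levelSeq_succ_eq (x : EuclideanSpace ℝ (Fin d)) (n : ℕ) :
    levelSeq μ ε k C x (n + 1) = childLevel μ ε k C (levelSeq μ ε k C x n) x := rfl

lemma levelSeq_succ_lb (hk : 1 ≤ k) (x : EuclideanSpace ℝ (Fin d)) (n : ℕ) :
    levelSeq μ ε k C x n + 1 ≤ levelSeq μ ε k C x (n + 1) :=
  childLevel_lb C hk _ x

lemma levelSeq_succ_ub (hk : 1 ≤ k) (x : EuclideanSpace ℝ (Fin d)) (n : ℕ) :
    levelSeq μ ε k C x (n + 1) ≤ levelSeq μ ε k C x n + k :=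
  childLevel_ub C hk _ x

lemma levelSeq_mono (hk : 1 ≤ k) (x : EuclideanSpace ℝ (Fin d)) {i n : ℕ} (h : i ≤ n) :
    levelSeq μ ε k C x i ≤ levelSeq μ ε k C x n := by
  induction n with
  | zero =>
    have h0 : i = 0 := Nat.le_zero.mp h
    subst h0; exact le_refl _
  | succ n ih =>
    rcases Nat.le_succ_iff.mp h with h' | rfl
    · exact le_trans (ih h') (le_trans (Nat.le_succ _) (levelSeq_succ_lb C hk x n))
    · exact le_refl _

lemma levelSeq_congr (hk : 1 ≤ k) (x : EuclideanSpace ℝ (Fin d)) :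
    ∀ n (y : EuclideanSpace ℝ (Fin d)), y ∈ dyadicCube d (levelSeq μ ε k C x n) x →
      ∀ j ≤ n, levelSeq μ ε k C y j = levelSeq μ ε k C x j := by
  intro n
  induction n with
  | zero => intro y _ j hj; interval_cases j; rfl
  | succ n ih =>
    intro y hy j hj
    have hy' : y ∈ dyadicCube d (levelSeq μ ε k C x n) x :=
      cube_subset (levelSeq_mono C hk x (Nat.le_succ n)) x hy
    rcases Nat.le_succ_iff.mp hj with hj' | rfl
    · exact ih y hy' j hj'
    · rw [levelSeq_succ_eq, levelSeq_succ_eq, ih y hy' n le_rfl]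
      exact childLevel_congr C hk hy

end
end S16

namespace S16
section
variable {d : ℕ} {μ : Measure (EuclideanSpace ℝ (Fin d))} {ε : ℝ} {k : ℕ}

/-- The martingale difference summand. -/
noncomputable def Y (μ : Measure (EuclideanSpace ℝ (Fin d))) (ε : ℝ) (k : ℕ)
    (C : AdmissibleChoice μ ε k) (i : ℕ) (x : EuclideanSpace ℝ (Fin d)) : ℝ :=
  Set.indicator {i : ℕ | PorousCube μ ε k (levelSeq μ ε k C x i) x}
    (fun i => lyapPorous μ ε k C (levelSeq μ ε k C x i) x
      - Real.log 2 * ((levelSeq μ ε k C x (i + 1) : ℝ) - (levelSeq μ ε k C x i : ℝ))) i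

variable (C : AdmissibleChoice μ ε k)

lemma Y_of_porous {i : ℕ} {x : EuclideanSpace ℝ (Fin d)}
    (hp : PorousCube μ ε k (levelSeq μ ε k C x i) x) :
    Y μ ε k C i x = lyapPorous μ ε k C (levelSeq μ ε k C x i) x
      - Real.log 2 * ((levelSeq μ ε k C x (i + 1) : ℝ) - (levelSeq μ ε k C x i : ℝ)) :=
  Set.indicator_of_mem
    (show i ∈ {i : ℕ | PorousCube μ ε k (levelSeq μ ε k C x i) x} from hp) _

lemma Y_of_not_porous {i : ℕ} {x : EuclideanSpace ℝ (Fin d)}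
    (hp : ¬ PorousCube μ ε k (levelSeq μ ε k C x i) x) :
    Y μ ε k C i x = 0 :=
  Set.indicator_of_notMem
    (show i ∉ {i : ℕ | PorousCube μ ε k (levelSeq μ ε k C x i) x} from hp) _

lemma abel_sum (a : ℕ → ℝ) (k : ℕ) :
    (k : ℝ) * a k + ∑ j ∈ Finset.range k, ((j : ℝ) + 1) * (a j - a (j + 1)) =
      ∑ j ∈ Finset.range k, a j := by
  induction k with
  | zero => simp
  | succ k ih =>
    rw [Finset.sum_range_succ, Finset.sum_range_succ (f := a)]
    push_cast
    nlinarith [ih]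

lemma lyap_eq (C : AdmissibleChoice μ ε k) (m : ℕ) (x : EuclideanSpace ℝ (Fin d)) :
    lyapPorous μ ε k C m x = Real.log 2 / (μ (dyadicCube d m x)).toReal *
      ∑ j ∈ Finset.range k, (μ (dyadicCube d (m + j) (C.c m x))).toReal := by
  unfold lyapPorous
  simp only [Nat.add_assoc]
  rw [abel_sum (fun j => (μ (dyadicCube d (m + j) (C.c m x))).toReal) k]

lemma lyap_nonneg (m : ℕ) (x : EuclideanSpace ℝ (Fin d)) (h2 : (0:ℝ) < 2) :
    0 ≤ lyapPorous μ ε k C m x := by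
  rw [lyap_eq]
  apply mul_nonneg
  · apply div_nonneg (Real.log_nonneg (by norm_num)) ENNReal.toReal_nonneg
  · exact Finset.sum_nonneg fun j _ => ENNReal.toReal_nonneg

lemma lyap_le [IsProbabilityMeasure μ] {m : ℕ} {x : EuclideanSpace ℝ (Fin d)}
    (hp : PorousCube μ ε k m x) :
    lyapPorous μ ε k C m x ≤ (k : ℝ) * Real.log 2 := by
  rw [lyap_eq]
  rcases eq_or_ne ((μ (dyadicCube d m x)).toReal) 0 with h0 | h0
  · rw [h0]
    simp only [div_zero, zero_mul]
    positivity
  · have hc : C.c m x ∈ dyadicCube d m x := C.mem m x hp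
    have hsub : ∀ j : ℕ, (μ (dyadicCube d (m + j) (C.c m x))).toReal ≤
        (μ (dyadicCube d m x)).toReal := by
      intro j
      apply ENNReal.toReal_mono (measure_ne_top μ _)
      apply measure_mono
      refine subset_trans (cube_subset (Nat.le_add_right m j) _) ?_
      rw [cube_eq_of_mem hc]
    have hsum : ∑ j ∈ Finset.range k, (μ (dyadicCube d (m + j) (C.c m x))).toReal ≤
        (k : ℝ) * (μ (dyadicCube d m x)).toReal := by
      calc ∑ j ∈ Finset.range k, (μ (dyadicCube d (m + j) (C.c m x))).toReal
          ≤ ∑ _j ∈ Finset.range k, (μ (dyadicCube d m x)).toReal :=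
            Finset.sum_le_sum fun j _ => hsub j
        _ = (k : ℝ) * (μ (dyadicCube d m x)).toReal := by
            rw [Finset.sum_const, Finset.card_range, nsmul_eq_mul]
    have hpos : 0 < (μ (dyadicCube d m x)).toReal :=
      lt_of_le_of_ne ENNReal.toReal_nonneg (Ne.symm h0)
    rw [div_mul_eq_mul_div, div_le_iff₀ hpos]
    calc Real.log 2 * ∑ j ∈ Finset.range k, (μ (dyadicCube d (m + j) (C.c m x))).toReal
        ≤ Real.log 2 * ((k : ℝ) * (μ (dyadicCube d m x)).toReal) := by
          apply mul_le_mul_of_nonneg_left hsum (Real.log_nonneg (by norm_num))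
      _ = (k : ℝ) * Real.log 2 * (μ (dyadicCube d m x)).toReal := by ring

lemma Y_abs_le [IsProbabilityMeasure μ] (hk : 1 ≤ k) (i : ℕ) (x : EuclideanSpace ℝ (Fin d)) :
    |Y μ ε k C i x| ≤ 2 * (k : ℝ) * Real.log 2 := by
  by_cases hp : PorousCube μ ε k (levelSeq μ ε k C x i) x
  · rw [Y_of_porous C hp]
    have h1 : 0 ≤ lyapPorous μ ε k C (levelSeq μ ε k C x i) x := lyap_nonneg C _ _ (by norm_num)
    have h2 : lyapPorous μ ε k C (levelSeq μ ε k C x i) x ≤ (k : ℝ) * Real.log 2 :=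
      lyap_le C hp
    have h3 : (levelSeq μ ε k C x i : ℝ) + 1 ≤ (levelSeq μ ε k C x (i + 1) : ℝ) := by
      exact_mod_cast levelSeq_succ_lb C hk x i
    have h4 : (levelSeq μ ε k C x (i + 1) : ℝ) ≤ (levelSeq μ ε k C x i : ℝ) + k := by
      exact_mod_cast levelSeq_succ_ub C hk x i
    have hlog : 0 ≤ Real.log 2 := Real.log_nonneg (by norm_num)
    rw [abs_le]
    constructor <;> nlinarith
  · rw [Y_of_not_porous C hp]
    simp only [abs_zero]
    positivity

lemma Y_congr (hk : 1 ≤ k) {i : ℕ} {x y : EuclideanSpace ℝ (Fin d)}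
    (h : y ∈ dyadicCube d (levelSeq μ ε k C x (i + 1)) x) :
    Y μ ε k C i y = Y μ ε k C i x := by
  have hMi : levelSeq μ ε k C y i = levelSeq μ ε k C x i :=
    levelSeq_congr C hk x (i + 1) y h i (Nat.le_succ i)
  have hMi1 : levelSeq μ ε k C y (i + 1) = levelSeq μ ε k C x (i + 1) :=
    levelSeq_congr C hk x (i + 1) y h (i + 1) le_rfl
  set m := levelSeq μ ε k C x i with hm
  have hym : y ∈ dyadicCube d m x :=
    cube_subset (levelSeq_mono C hk x (Nat.le_succ i)) x h
  have hcc : C.c m y = C.c m x := C.compat m x y hym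
  have hcube : dyadicCube d m y = dyadicCube d m x := cube_eq_of_mem hym
  have hlyap : lyapPorous μ ε k C m y = lyapPorous μ ε k C m x := by
    unfold lyapPorous
    rw [hcc, hcube]
  by_cases hp : PorousCube μ ε k m x
  · have hpy : PorousCube μ ε k m y := (porous_congr hym).mpr hp
    rw [Y_of_porous C (by rw [hMi]; exact hpy), Y_of_porous C hp, hMi, hMi1, hlyap]
  · have hpy : ¬ PorousCube μ ε k m y := fun h' => hp ((porous_congr hym).mp h')
    rw [Y_of_not_porous C (by rw [hMi]; exact hpy), Y_of_not_porous C hp]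

/-- The countable code of the tree node at step `i` containing `x`. -/
noncomputable def code (μ : Measure (EuclideanSpace ℝ (Fin d))) (ε : ℝ) (k : ℕ)
    (C : AdmissibleChoice μ ε k) (i : ℕ) (x : EuclideanSpace ℝ (Fin d)) : ℕ × (Fin d → ℤ) :=
  (levelSeq μ ε k C x i, fun j => ⌊(2 : ℝ) ^ (levelSeq μ ε k C x i) * x j⌋)

lemma mem_of_code_eq (hk : 1 ≤ k) {i : ℕ} {x y : EuclideanSpace ℝ (Fin d)}
    (h : code μ ε k C i y = code μ ε k C i x) :
    y ∈ dyadicCube d (levelSeq μ ε k C x i) x := by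
  have h1 : levelSeq μ ε k C y i = levelSeq μ ε k C x i := congrArg Prod.fst h
  have h2 := congrArg Prod.snd h
  intro j
  have := congrFun h2 j
  simp only [code] at this
  rw [h1] at this
  exact this

lemma code_eq_of_mem (hk : 1 ≤ k) {i : ℕ} {x y : EuclideanSpace ℝ (Fin d)}
    (h : y ∈ dyadicCube d (levelSeq μ ε k C x i) x) :
    code μ ε k C i y = code μ ε k C i x := by
  have h1 : levelSeq μ ε k C y i = levelSeq μ ε k C x i :=
    levelSeq_congr C hk x i y h i le_rfl
  unfold code
  rw [h1]
  exact Prod.ext rfl (funext fun j => h j)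

lemma measurable_code (hk : 1 ≤ k) (i : ℕ) : Measurable (code μ ε k C i) := by
  apply measurable_to_countable
  intro y
  have : code μ ε k C i ⁻¹' {code μ ε k C i y} = dyadicCube d (levelSeq μ ε k C y i) y := by
    ext z
    simp only [Set.mem_preimage, Set.mem_singleton_iff]
    exact ⟨fun h => mem_of_code_eq C hk h, fun h => code_eq_of_mem C hk h⟩
  rw [this]
  exact measurableSet_cube _ _

lemma measurable_of_const_on_fibers {α β : Type*} [MeasurableSpace α] [MeasurableSpace β]
    [MeasurableSingletonClass β] [Countable β] {F : α → β} (hF : Measurable F)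
    {f : α → ℝ} (hf : ∀ x y, F y = F x → f y = f x) : Measurable f := by
  intro s _
  have key : f ⁻¹' s = F ⁻¹' (F '' (f ⁻¹' s)) := by
    apply Set.Subset.antisymm (Set.subset_preimage_image F _)
    rintro x ⟨x', hx', hFx⟩
    replace hFx : F x = F x' := hFx.symm
    have : f x = f x' := hf x' x hFx
    simpa [Set.mem_preimage, this] using hx'
  rw [key]
  exact hF ((Set.to_countable _).measurableSet)

lemma measurable_Y (hk : 1 ≤ k) (i : ℕ) : Measurable (Y μ ε k C i) := by
  apply measurable_of_const_on_fibers (measurable_code C hk (i + 1))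
  intro x y h
  exact Y_congr C hk (mem_of_code_eq C hk h)

end
end S16

namespace S16
open scoped Classical
section
variable {d : ℕ} {μ : Measure (EuclideanSpace ℝ (Fin d))} {ε : ℝ} {k : ℕ}
  (C : AdmissibleChoice μ ε k)

lemma integrable_Y [IsProbabilityMeasure μ] (hk : 1 ≤ k) (i : ℕ) :
    Integrable (Y μ ε k C i) μ :=
  ⟨(measurable_Y C hk i).aestronglyMeasurable,
    HasFiniteIntegral.of_bounded (C := 2 * (k : ℝ) * Real.log 2)
      (ae_of_all μ fun x => by rw [Real.norm_eq_abs]; exact Y_abs_le C hk i x)⟩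

lemma fiber_eq (hk : 1 ≤ k) (i : ℕ) (x₀ : EuclideanSpace ℝ (Fin d)) :
    code μ ε k C i ⁻¹' {code μ ε k C i x₀} = dyadicCube d (levelSeq μ ε k C x₀ i) x₀ := by
  ext z
  simp only [Set.mem_preimage, Set.mem_singleton_iff]
  exact ⟨fun h => mem_of_code_eq C hk h, fun h => code_eq_of_mem C hk h⟩

lemma childLevel_eq_sum (hk : 1 ≤ k) {m : ℕ} {x₀ : EuclideanSpace ℝ (Fin d)}
    (hp : PorousCube μ ε k m x₀) {y : EuclideanSpace ℝ (Fin d)}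
    (hy : y ∈ dyadicCube d m x₀) :
    childLevel μ ε k C m y = m + ∑ j ∈ Finset.range k,
      (if y ∈ dyadicCube d (m + j) (C.c m x₀) then 1 else 0) := by
  set c := C.c m x₀ with hcdef
  have hcQ : c ∈ dyadicCube d m x₀ := C.mem m x₀ hp
  have hcc : C.c m y = c := C.compat m x₀ y hy
  have hpy : PorousCube μ ε k m y := (porous_congr hy).mpr hp
  have hmemiff : ∀ j : ℕ, (c ∈ dyadicCube d (m + j) y ↔ y ∈ dyadicCube d (m + j) c) :=
    fun j => mem_cube_comm
  by_cases hmem : y ∈ dyadicCube d (m + k) c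
  · have h1 : childLevel μ ε k C m y = m + k := by
      unfold childLevel
      rw [if_pos hpy, if_pos (by rw [hcc]; exact (hmemiff k).mpr hmem)]
    rw [h1]
    congr 1
    have hall : ∀ j ∈ Finset.range k, y ∈ dyadicCube d (m + j) c := fun j hj =>
      cube_subset (Nat.add_le_add_left (Finset.mem_range.mp hj).le m) c hmem
    rw [Finset.sum_congr rfl (fun j hj => if_pos (hall j hj))]
    simp
  · have hcy : C.c m y ∉ dyadicCube d (m + k) y := by
      rw [hcc]; exact fun h => hmem ((hmemiff k).mp h)
    set S : Set ℕ := {j : ℕ | 1 ≤ j ∧ C.c m y ∉ dyadicCube d (m + j) y} with hSdef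
    have hkS : k ∈ S := ⟨hk, hcy⟩
    set j₀ := sInf S with hj₀def
    have hj₀S : j₀ ∈ S := Nat.sInf_mem ⟨k, hkS⟩
    have hj₀k : j₀ ≤ k := Nat.sInf_le hkS
    have h1 : childLevel μ ε k C m y = m + j₀ := by
      unfold childLevel
      rw [if_pos hpy, if_neg hcy]
    rw [h1]
    congr 1
    symm
    have hiff : ∀ j, y ∈ dyadicCube d (m + j) c ↔ j < j₀ := by
      intro j
      constructor
      · intro hj
        by_contra hcon
        push_neg at hcon
        have : y ∈ dyadicCube d (m + j₀) c :=
          cube_subset (Nat.add_le_add_left hcon m) c hj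
        exact hj₀S.2 (by rw [hcc]; exact (hmemiff j₀).mpr this)
      · intro hj
        rcases Nat.eq_zero_or_pos j with rfl | hj1
        · have : dyadicCube d (m + 0) c = dyadicCube d m x₀ := cube_eq_of_mem hcQ
          rw [this]; exact hy
        · have hns : j ∉ S := Nat.notMem_of_lt_sInf hj
          by_contra hcon
          exact hns ⟨hj1, by rw [hcc]; exact fun h => hcon ((hmemiff j).mp h)⟩
    calc ∑ j ∈ Finset.range k, (if y ∈ dyadicCube d (m + j) c then 1 else 0)
        = ∑ j ∈ Finset.range k, (if j < j₀ then 1 else 0) :=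
          Finset.sum_congr rfl fun j _ => if_congr (hiff j) rfl rfl
      _ = ∑ j ∈ (Finset.range k).filter (fun j => j < j₀), 1 := (Finset.sum_filter _ _).symm
      _ = j₀ := by
          rw [show (Finset.range k).filter (fun j => j < j₀) = Finset.range j₀ from by
            ext j; simp only [Finset.mem_filter, Finset.mem_range]; omega]
          simp

end
end S16

namespace S16
open scoped Classical
section
variable {d : ℕ} {μ : Measure (EuclideanSpace ℝ (Fin d))} {ε : ℝ} {k : ℕ}
  (C : AdmissibleChoice μ ε k)

lemma integral_Y_on_node [IsProbabilityMeasure μ] (hk : 1 ≤ k) (i : ℕ)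
    (x₀ : EuclideanSpace ℝ (Fin d)) :
    ∫ y in dyadicCube d (levelSeq μ ε k C x₀ i) x₀, Y μ ε k C i y ∂μ = 0 := by
  set m := levelSeq μ ε k C x₀ i with hm
  by_cases hQ0 : μ (dyadicCube d m x₀) = 0
  · rw [Measure.restrict_eq_zero.mpr hQ0]
    exact integral_zero_measure _
  by_cases hp : PorousCube μ ε k m x₀
  · have hcQ : C.c m x₀ ∈ dyadicCube d m x₀ := C.mem m x₀ hp
    have hA0 : dyadicCube d (m + 0) (C.c m x₀) = dyadicCube d m x₀ := cube_eq_of_mem hcQ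
    have hAsub : ∀ j, dyadicCube d (m + j) (C.c m x₀) ⊆ dyadicCube d m x₀ := by
      intro j
      rw [← hA0]
      exact cube_subset (Nat.le_add_right m j) (C.c m x₀)
    have key : ∀ y ∈ dyadicCube d m x₀, Y μ ε k C i y = lyapPorous μ ε k C m x₀
        - Real.log 2 * (∑ j ∈ Finset.range k,
            Set.indicator (dyadicCube d (m + j) (C.c m x₀)) (fun _ => (1:ℝ)) y) := by
      intro y hy
      have hMy : levelSeq μ ε k C y i = m := levelSeq_congr C hk x₀ i y hy i le_rfl
      have hpy : PorousCube μ ε k m y := (porous_congr hy).mpr hp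
      have hcc : C.c m y = C.c m x₀ := C.compat m x₀ y hy
      have hlyap : lyapPorous μ ε k C m y = lyapPorous μ ε k C m x₀ := by
        unfold lyapPorous
        rw [hcc, cube_eq_of_mem hy]
      have hY := Y_of_porous C
        (show PorousCube μ ε k (levelSeq μ ε k C y i) y by rw [hMy]; exact hpy)
      rw [hY, hMy, hlyap]
      have hnat : levelSeq μ ε k C y (i + 1) = m + ∑ j ∈ Finset.range k,
          (if y ∈ dyadicCube d (m + j) (C.c m x₀) then 1 else 0) := by
        rw [levelSeq_succ_eq, hMy, childLevel_eq_sum C hk hp hy]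
      have hsum : (levelSeq μ ε k C y (i + 1) : ℝ) - (m : ℝ) = ∑ j ∈ Finset.range k,
          Set.indicator (dyadicCube d (m + j) (C.c m x₀)) (fun _ => (1:ℝ)) y := by
        rw [hnat]
        push_cast
        rw [add_sub_cancel_left]
        apply Finset.sum_congr rfl
        intro j _
        by_cases hyj : y ∈ dyadicCube d (m + j) (C.c m x₀)
        · simp [Set.indicator_of_mem hyj, hyj]
        · simp [Set.indicator_of_notMem hyj, hyj]
      rw [hsum]
    rw [setIntegral_congr_fun (measurableSet_cube m x₀) key]
    have hintind : ∀ j ∈ Finset.range k, Integrable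
        (fun y => Set.indicator (dyadicCube d (m + j) (C.c m x₀)) (fun _ => (1:ℝ)) y)
        (μ.restrict (dyadicCube d m x₀)) := fun j _ =>
      (integrable_const (1:ℝ)).indicator (measurableSet_cube _ (C.c m x₀))
    have hint2 : Integrable (fun y => ∑ j ∈ Finset.range k,
        Set.indicator (dyadicCube d (m + j) (C.c m x₀)) (fun _ => (1:ℝ)) y)
        (μ.restrict (dyadicCube d m x₀)) := integrable_finset_sum _ hintind
    rw [integral_sub (integrable_const _) (hint2.const_mul (Real.log 2))]
    rw [setIntegral_const, integral_const_mul, integral_finset_sum _ hintind]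
    have hterm : ∀ j ∈ Finset.range k,
        ∫ y in dyadicCube d m x₀,
          Set.indicator (dyadicCube d (m + j) (C.c m x₀)) (fun _ => (1:ℝ)) y ∂μ
        = (μ (dyadicCube d (m + j) (C.c m x₀))).toReal := by
      intro j _
      rw [integral_indicator (measurableSet_cube _ (C.c m x₀)),
        Measure.restrict_restrict (measurableSet_cube _ (C.c m x₀)),
        Set.inter_eq_self_of_subset_left (hAsub j), setIntegral_const, smul_eq_mul, mul_one]
      rfl
    rw [Finset.sum_congr rfl hterm]
    have hr : (μ (dyadicCube d m x₀)).toReal ≠ 0 :=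
      ENNReal.toReal_ne_zero.mpr ⟨hQ0, measure_ne_top μ _⟩
    rw [lyap_eq, smul_eq_mul, measureReal_def]
    field_simp
    ring
  · have hzero : EqOn (Y μ ε k C i) (fun _ => (0:ℝ)) (dyadicCube d m x₀) := by
      intro y hy
      have hMy : levelSeq μ ε k C y i = m := levelSeq_congr C hk x₀ i y hy i le_rfl
      exact Y_of_not_porous C (by rw [hMy]; exact fun h' => hp ((porous_congr hy).mp h'))
    rw [setIntegral_congr_fun (measurableSet_cube m x₀) hzero]
    simp

end
end S16

namespace S16
section
variable {d : ℕ} {μ : Measure (EuclideanSpace ℝ (Fin d))} {ε : ℝ} {k : ℕ}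
  (C : AdmissibleChoice μ ε k)

lemma integral_Y_mul [IsProbabilityMeasure μ] (hk : 1 ≤ k) (i : ℕ)
    {g : EuclideanSpace ℝ (Fin d) → ℝ} (hg : Measurable g) {Cg : ℝ} (hgb : ∀ x, |g x| ≤ Cg)
    (hgc : ∀ x y, y ∈ dyadicCube d (levelSeq μ ε k C x i) x → g y = g x) :
    ∫ x, Y μ ε k C i x * g x ∂μ = 0 := by
  have hint : Integrable (fun x => Y μ ε k C i x * g x) μ := by
    refine ⟨((measurable_Y C hk i).mul hg).aestronglyMeasurable,
      HasFiniteIntegral.of_bounded (C := (2 * (k : ℝ) * Real.log 2) * Cg)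
        (ae_of_all μ fun x => ?_)⟩
    rw [Real.norm_eq_abs, abs_mul]
    apply mul_le_mul (Y_abs_le C hk i x) (hgb x) (abs_nonneg _)
    positivity
  have huniv : (Set.univ : Set (EuclideanSpace ℝ (Fin d))) =
      ⋃ v : ℕ × (Fin d → ℤ), code μ ε k C i ⁻¹' {v} := by
    ext x
    simp only [Set.mem_univ, Set.mem_iUnion, Set.mem_preimage, Set.mem_singleton_iff, true_iff]
    exact ⟨code μ ε k C i x, rfl⟩
  have hmeas : ∀ v : ℕ × (Fin d → ℤ), MeasurableSet (code μ ε k C i ⁻¹' {v}) :=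
    fun v => measurable_code C hk i (measurableSet_singleton v)
  have hdisj : Pairwise (Function.onFun Disjoint fun v : ℕ × (Fin d → ℤ) =>
      code μ ε k C i ⁻¹' {v}) := by
    intro v w hvw
    rw [Function.onFun, Set.disjoint_left]
    rintro x hxv hxw
    exact hvw (by rw [← Set.mem_singleton_iff.mp hxv, ← Set.mem_singleton_iff.mp hxw])
  calc ∫ x, Y μ ε k C i x * g x ∂μ
      = ∫ x in ⋃ v : ℕ × (Fin d → ℤ), code μ ε k C i ⁻¹' {v}, Y μ ε k C i x * g x ∂μ := by
        rw [← huniv, Measure.restrict_univ]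
    _ = ∑' v : ℕ × (Fin d → ℤ), ∫ x in code μ ε k C i ⁻¹' {v}, Y μ ε k C i x * g x ∂μ := by
        apply integral_iUnion hmeas hdisj
        rw [← huniv]
        exact hint.integrableOn
    _ = 0 := by
        rw [tsum_congr, tsum_zero]
        intro v
        rcases Set.eq_empty_or_nonempty (code μ ε k C i ⁻¹' {v}) with hemp | ⟨x₀, hx₀⟩
        · rw [hemp, Measure.restrict_empty, integral_zero_measure]
        · have hfib : code μ ε k C i ⁻¹' {v} = dyadicCube d (levelSeq μ ε k C x₀ i) x₀ := by
            rw [← Set.mem_singleton_iff.mp hx₀]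
            exact fiber_eq C hk i x₀
          rw [hfib]
          have heq : EqOn (fun y => Y μ ε k C i y * g y) (fun y => g x₀ * Y μ ε k C i y)
              (dyadicCube d (levelSeq μ ε k C x₀ i) x₀) := by
            intro y hy
            simp only
            rw [hgc x₀ y hy, mul_comm]
          rw [setIntegral_congr_fun (measurableSet_cube _ x₀) heq, integral_const_mul,
            integral_Y_on_node C hk i x₀, mul_zero]

lemma integrable_Y_mul_Y [IsProbabilityMeasure μ] (hk : 1 ≤ k) (i j : ℕ) :
    Integrable (fun x => Y μ ε k C i x * Y μ ε k C j x) μ := by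
  refine ⟨((measurable_Y C hk i).mul (measurable_Y C hk j)).aestronglyMeasurable,
    HasFiniteIntegral.of_bounded (C := (2 * (k : ℝ) * Real.log 2) * (2 * (k : ℝ) * Real.log 2))
      (ae_of_all μ fun x => ?_)⟩
  rw [Real.norm_eq_abs, abs_mul]
  apply mul_le_mul (Y_abs_le C hk i x) (Y_abs_le C hk j x) (abs_nonneg _)
  positivity

lemma integral_Y_orth [IsProbabilityMeasure μ] (hk : 1 ≤ k) {i j : ℕ} (hij : j < i) :
    ∫ x, Y μ ε k C i x * Y μ ε k C j x ∂μ = 0 := by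
  apply integral_Y_mul C hk i (measurable_Y C hk j) (Y_abs_le C hk j)
  intro x y hy
  apply Y_congr C hk
  exact cube_subset (levelSeq_mono C hk x (Nat.succ_le_of_lt hij)) x hy

lemma integral_Y_orth' [IsProbabilityMeasure μ] (hk : 1 ≤ k) {i j : ℕ} (hij : i ≠ j) :
    ∫ x, Y μ ε k C i x * Y μ ε k C j x ∂μ = 0 := by
  rcases hij.lt_or_gt with h | h
  · have hcomm : (fun x => Y μ ε k C i x * Y μ ε k C j x) =
        fun x => Y μ ε k C j x * Y μ ε k C i x := funext fun x => mul_comm _ _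
    rw [hcomm]
    exact integral_Y_orth C hk h
  · exact integral_Y_orth C hk h

lemma integral_S_sq_le [IsProbabilityMeasure μ] (hk : 1 ≤ k) (n : ℕ) :
    ∫ x, (∑ i ∈ Finset.range n, Y μ ε k C i x)^2 ∂μ ≤
      (n : ℝ) * (2 * (k : ℝ) * Real.log 2)^2 := by
  set B := 2 * (k : ℝ) * Real.log 2 with hB
  have hB0 : 0 ≤ B := by positivity
  have h1 : ∫ x, (∑ i ∈ Finset.range n, Y μ ε k C i x)^2 ∂μ
      = ∑ i ∈ Finset.range n, ∑ j ∈ Finset.range n, ∫ x, Y μ ε k C i x * Y μ ε k C j x ∂μ := by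
    calc ∫ x, (∑ i ∈ Finset.range n, Y μ ε k C i x)^2 ∂μ
        = ∫ x, ∑ i ∈ Finset.range n, ∑ j ∈ Finset.range n,
            Y μ ε k C i x * Y μ ε k C j x ∂μ := by
          apply integral_congr_ae
          filter_upwards with x
          rw [sq, Finset.sum_mul_sum]
      _ = ∑ i ∈ Finset.range n, ∑ j ∈ Finset.range n,
            ∫ x, Y μ ε k C i x * Y μ ε k C j x ∂μ := by
          rw [integral_finset_sum _ (fun i _ => integrable_finset_sum _
            (fun j _ => integrable_Y_mul_Y C hk i j))]
          exact Finset.sum_congr rfl fun i _ =>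
            integral_finset_sum _ (fun j _ => integrable_Y_mul_Y C hk i j)
  rw [h1]
  have h2 : ∀ i ∈ Finset.range n, ∑ j ∈ Finset.range n,
      ∫ x, Y μ ε k C i x * Y μ ε k C j x ∂μ = ∫ x, Y μ ε k C i x * Y μ ε k C i x ∂μ := by
    intro i hi
    apply Finset.sum_eq_single_of_mem i hi
    intro j _ hji
    exact integral_Y_orth' C hk (Ne.symm hji)
  rw [Finset.sum_congr rfl h2]
  have h3 : ∀ i ∈ Finset.range n, ∫ x, Y μ ε k C i x * Y μ ε k C i x ∂μ ≤ B^2 := by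
    intro i _
    have hpt : ∀ x, Y μ ε k C i x * Y μ ε k C i x ≤ B^2 := by
      intro x
      have := Y_abs_le C hk i x
      nlinarith [abs_nonneg (Y μ ε k C i x), neg_abs_le (Y μ ε k C i x),
        le_abs_self (Y μ ε k C i x)]
    calc ∫ x, Y μ ε k C i x * Y μ ε k C i x ∂μ ≤ ∫ _x, B^2 ∂μ :=
          integral_mono (integrable_Y_mul_Y C hk i i) (integrable_const _) hpt
      _ = B^2 := by rw [integral_const, probReal_univ, one_smul]
  calc ∑ i ∈ Finset.range n, ∫ x, Y μ ε k C i x * Y μ ε k C i x ∂μ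
      ≤ ∑ _i ∈ Finset.range n, B^2 := Finset.sum_le_sum h3
    _ = (n : ℝ) * B^2 := by rw [Finset.sum_const, Finset.card_range, nsmul_eq_mul]

end
end S16

namespace S16
section
variable {d : ℕ} {μ : Measure (EuclideanSpace ℝ (Fin d))} {ε : ℝ} {k : ℕ}
  (C : AdmissibleChoice μ ε k)

lemma ae_tendsto_sq [IsProbabilityMeasure μ] (hk : 1 ≤ k) :
    ∀ᵐ x ∂μ, Filter.Tendsto (fun m : ℕ =>
      |∑ i ∈ Finset.range ((m + 1) ^ 2), Y μ ε k C i x| / (((m + 1) ^ 2 : ℕ) : ℝ))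
      Filter.atTop (nhds 0) := by
  set B := 2 * (k : ℝ) * Real.log 2 with hB
  have hB0 : 0 ≤ B := by positivity
  set g : ℕ → EuclideanSpace ℝ (Fin d) → ℝ := fun m x =>
    ((∑ i ∈ Finset.range ((m + 1) ^ 2), Y μ ε k C i x) / (((m + 1) ^ 2 : ℕ) : ℝ)) ^ 2 with hg
  have hgmeas : ∀ m, Measurable (g m) := fun m =>
    ((Finset.measurable_sum _ fun i _ => measurable_Y C hk i).div_const _).pow_const 2
  have hgbd : ∀ m x, |g m x| ≤ B ^ 2 := by
    intro m x
    have hNpos : (0 : ℝ) < (((m + 1) ^ 2 : ℕ) : ℝ) := by positivity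
    have hs : |∑ i ∈ Finset.range ((m + 1) ^ 2), Y μ ε k C i x| ≤
        (((m + 1) ^ 2 : ℕ) : ℝ) * B := by
      calc |∑ i ∈ Finset.range ((m + 1) ^ 2), Y μ ε k C i x|
          ≤ ∑ i ∈ Finset.range ((m + 1) ^ 2), |Y μ ε k C i x| :=
            Finset.abs_sum_le_sum_abs _ _
        _ ≤ ∑ _i ∈ Finset.range ((m + 1) ^ 2), B :=
            Finset.sum_le_sum fun i _ => Y_abs_le C hk i x
        _ = (((m + 1) ^ 2 : ℕ) : ℝ) * B := by
            rw [Finset.sum_const, Finset.card_range, nsmul_eq_mul]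
    have hq : |(∑ i ∈ Finset.range ((m + 1) ^ 2), Y μ ε k C i x) /
        (((m + 1) ^ 2 : ℕ) : ℝ)| ≤ B := by
      rw [abs_div, Nat.abs_cast, div_le_iff₀ hNpos, mul_comm]
      exact hs
    calc |g m x| = |(∑ i ∈ Finset.range ((m + 1) ^ 2), Y μ ε k C i x) /
          (((m + 1) ^ 2 : ℕ) : ℝ)| ^ 2 := by rw [hg]; simp [sq_abs, abs_pow]
      _ ≤ B ^ 2 := pow_le_pow_left₀ (abs_nonneg _) hq 2
  have hgint : ∀ m, Integrable (g m) μ := fun m =>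
    ⟨(hgmeas m).aestronglyMeasurable, HasFiniteIntegral.of_bounded (C := B ^ 2)
      (ae_of_all μ fun x => by rw [Real.norm_eq_abs]; exact hgbd m x)⟩
  have hgI : ∀ m, ∫ x, g m x ∂μ ≤ B ^ 2 / ((m : ℝ) + 1) ^ 2 := by
    intro m
    have hNR : (((m + 1) ^ 2 : ℕ) : ℝ) = ((m : ℝ) + 1) ^ 2 := by push_cast; ring
    have hNpos : (0 : ℝ) < ((m : ℝ) + 1) ^ 2 := by positivity
    have hrw : g m = fun x => (∑ i ∈ Finset.range ((m + 1) ^ 2), Y μ ε k C i x) ^ 2 /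
        (((m + 1) ^ 2 : ℕ) : ℝ) ^ 2 := funext fun x => div_pow _ _ 2
    rw [hrw]
    rw [integral_div]
    rw [hNR]
    rw [div_le_div_iff₀ (by positivity) hNpos]
    have h2 := integral_S_sq_le C hk ((m + 1) ^ 2)
    calc (∫ x, (∑ i ∈ Finset.range ((m + 1) ^ 2), Y μ ε k C i x) ^ 2 ∂μ) * ((m : ℝ) + 1) ^ 2
        ≤ ((((m + 1) ^ 2 : ℕ) : ℝ) * B ^ 2) * ((m : ℝ) + 1) ^ 2 := by
          apply mul_le_mul_of_nonneg_right _ (le_of_lt hNpos)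
          rw [← hB] at h2
          exact h2
      _ = B ^ 2 * (((m : ℝ) + 1) ^ 2) ^ 2 := by rw [hNR]; ring
  have hsummable : Summable (fun m : ℕ => B ^ 2 / ((m : ℝ) + 1) ^ 2) := by
    have h1 : Summable (fun n : ℕ => 1 / (n : ℝ) ^ 2) := Real.summable_one_div_nat_pow.mpr one_lt_two
    have h2 : Summable (fun m : ℕ => 1 / ((m : ℝ) + 1) ^ 2) := by
      have := (summable_nat_add_iff 1).mpr h1
      apply this.congr
      intro m
      push_cast
      ring
    have h3 := h2.mul_left (B ^ 2)
    apply h3.congr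
    intro m
    rw [mul_one_div]
  have hlint : ∫⁻ x, ∑' m, ENNReal.ofReal (g m x) ∂μ ≠ ⊤ := by
    rw [lintegral_tsum fun m => ((hgmeas m).ennreal_ofReal).aemeasurable]
    have hone : ∀ m, ∫⁻ x, ENNReal.ofReal (g m x) ∂μ = ENNReal.ofReal (∫ x, g m x ∂μ) :=
      fun m => (ofReal_integral_eq_lintegral_ofReal (hgint m)
        (ae_of_all μ fun x => sq_nonneg _)).symm
    have hle : ∑' m, ∫⁻ x, ENNReal.ofReal (g m x) ∂μ ≤
        ∑' m : ℕ, ENNReal.ofReal (B ^ 2 / ((m : ℝ) + 1) ^ 2) := by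
      apply ENNReal.tsum_le_tsum
      intro m
      rw [hone m]
      exact ENNReal.ofReal_le_ofReal (hgI m)
    apply ne_top_of_le_ne_top _ hle
    rw [← ENNReal.ofReal_tsum_of_nonneg (fun m => by positivity) hsummable]
    exact ENNReal.ofReal_ne_top
  have hae := ae_lt_top (Measurable.ennreal_tsum fun m => (hgmeas m).ennreal_ofReal) hlint
  filter_upwards [hae] with x hx
  have h0 : Filter.Tendsto (fun m => ENNReal.ofReal (g m x)) Filter.atTop (nhds 0) :=
    ENNReal.tendsto_atTop_zero_of_tsum_ne_top hx.ne
  have h1 : Filter.Tendsto (fun m => g m x) Filter.atTop (nhds 0) := by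
    have h2 := (ENNReal.tendsto_toReal (by simp : (0:ℝ≥0∞) ≠ ⊤)).comp h0
    have hgn : ∀ m, 0 ≤ g m x := fun m => sq_nonneg _
    simp only [Function.comp_def, ENNReal.toReal_ofReal (hgn _), ENNReal.toReal_zero] at h2
    exact h2
  have h2 : Filter.Tendsto (fun m => Real.sqrt (g m x)) Filter.atTop (nhds 0) := by
    have h3 := (Real.continuous_sqrt.tendsto 0).comp h1
    simpa [Function.comp_def] using h3
  refine h2.congr fun m => ?_
  rw [hg]
  simp only
  rw [Real.sqrt_sq_eq_abs, abs_div, Nat.abs_cast]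

lemma tendsto_avg_of_sq {Yb : ℕ → ℝ} {B : ℝ} (hB : 0 ≤ B) (hY : ∀ i, |Yb i| ≤ B)
    (h : Filter.Tendsto (fun m : ℕ =>
      |∑ i ∈ Finset.range ((m + 1) ^ 2), Yb i| / (((m + 1) ^ 2 : ℕ) : ℝ))
      Filter.atTop (nhds 0)) :
    Filter.Tendsto (fun n : ℕ => (∑ i ∈ Finset.range n, Yb i) / (n : ℝ))
      Filter.atTop (nhds 0) := by
  set f : ℕ → ℝ := fun m => |∑ i ∈ Finset.range (m ^ 2), Yb i| / ((m ^ 2 : ℕ) : ℝ) with hf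
  have hft : Filter.Tendsto f Filter.atTop (nhds 0) := by
    rw [← Filter.tendsto_add_atTop_iff_nat 1]
    exact h
  have hsqrt : Filter.Tendsto Nat.sqrt Filter.atTop Filter.atTop := by
    apply Filter.tendsto_atTop_atTop.mpr
    intro b
    exact ⟨b * b, fun n hn => Nat.le_sqrt.mpr hn⟩
  have hdiv : Filter.Tendsto (fun n : ℕ => 2 * B / (Nat.sqrt n : ℝ))
      Filter.atTop (nhds 0) := (tendsto_const_div_atTop_nhds_zero_nat (2 * B)).comp hsqrt
  have hcomp : Filter.Tendsto (fun n : ℕ => f (Nat.sqrt n) + 2 * B / (Nat.sqrt n : ℝ))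
      Filter.atTop (nhds 0) := by
    have h4 := (hft.comp hsqrt).add hdiv
    simpa using h4
  rw [tendsto_zero_iff_abs_tendsto_zero]
  apply squeeze_zero' (Filter.Eventually.of_forall fun n => abs_nonneg _) _ hcomp
  rw [Filter.eventually_atTop]
  refine ⟨1, fun n hn => ?_⟩
  have hm1 : 1 ≤ Nat.sqrt n := Nat.sqrt_pos.mpr hn
  have hmn : Nat.sqrt n ^ 2 ≤ n := Nat.sqrt_le' n
  have hub : n < (Nat.sqrt n + 1) ^ 2 := Nat.lt_succ_sqrt' n
  set m := Nat.sqrt n with hm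
  have hmR : (0 : ℝ) < ((m ^ 2 : ℕ) : ℝ) := by
    have h5 : (0 : ℕ) < m ^ 2 := by positivity
    exact_mod_cast h5
  have hnR : (0 : ℝ) < (n : ℝ) := by exact_mod_cast hn
  have hsplit : ∑ i ∈ Finset.range n, Yb i =
      ∑ i ∈ Finset.range (m ^ 2), Yb i + ∑ i ∈ Finset.Ico (m ^ 2) n, Yb i :=
    (Finset.sum_range_add_sum_Ico _ hmn).symm
  have hIco : |∑ i ∈ Finset.Ico (m ^ 2) n, Yb i| ≤ ((n - m ^ 2 : ℕ) : ℝ) * B := by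
    calc |∑ i ∈ Finset.Ico (m ^ 2) n, Yb i| ≤ ∑ i ∈ Finset.Ico (m ^ 2) n, |Yb i| :=
          Finset.abs_sum_le_sum_abs _ _
      _ ≤ ∑ _i ∈ Finset.Ico (m ^ 2) n, B := Finset.sum_le_sum fun i _ => hY i
      _ = ((n - m ^ 2 : ℕ) : ℝ) * B := by
          rw [Finset.sum_const, Nat.card_Ico, nsmul_eq_mul]
  have hcard : ((n - m ^ 2 : ℕ) : ℝ) ≤ 2 * (m : ℝ) := by
    have hub' : n < m ^ 2 + 2 * m + 1 := by
      have : (m + 1) ^ 2 = m ^ 2 + 2 * m + 1 := by ring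
      omega
    have h6 : n - m ^ 2 ≤ 2 * m := by omega
    exact_mod_cast h6
  have h1 : |∑ i ∈ Finset.range n, Yb i| ≤
      |∑ i ∈ Finset.range (m ^ 2), Yb i| + 2 * (m : ℝ) * B := by
    rw [hsplit]
    calc |∑ i ∈ Finset.range (m ^ 2), Yb i + ∑ i ∈ Finset.Ico (m ^ 2) n, Yb i|
        ≤ |∑ i ∈ Finset.range (m ^ 2), Yb i| + |∑ i ∈ Finset.Ico (m ^ 2) n, Yb i| :=
          abs_add_le _ _
      _ ≤ |∑ i ∈ Finset.range (m ^ 2), Yb i| + 2 * (m : ℝ) * B := by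
          apply add_le_add_right
          exact hIco.trans (mul_le_mul_of_nonneg_right hcard hB)
  have h2 : |(∑ i ∈ Finset.range n, Yb i) / (n : ℝ)| =
      |∑ i ∈ Finset.range n, Yb i| / (n : ℝ) := by rw [abs_div, Nat.abs_cast]
  rw [h2]
  calc |∑ i ∈ Finset.range n, Yb i| / (n : ℝ)
      ≤ (|∑ i ∈ Finset.range (m ^ 2), Yb i| + 2 * (m : ℝ) * B) / ((m ^ 2 : ℕ) : ℝ) := by
        apply div_le_div₀ (by positivity) h1 hmR
        exact_mod_cast hmn
    _ = f m + 2 * B / (m : ℝ) := by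
        rw [add_div]
        congr 1
        have hmne : ((m : ℝ)) ≠ 0 := by positivity
        push_cast
        field_simp

end
end S16

/-- Let `μ` be a dyadic mean `(k,η,ε)`-porous probability measure on
`[0,1)^d` with `ε ∈ [0,2^{-kd}]`, and let `R*` be the associated tree (for any admissible
choice `C`). With `M̄_i(x) = log(ℓ(R_i(x))/ℓ(R_{i+1}(x)))`, for `μ`-a.e. `x` one has
`(1/n)·Σ_{i<n, R_i(x)∈𝒫} (λ(R_i(x)) − M̄_i(x)) → 0`. -/
theorem lyapunov_matches_length_on_porous_scales (d k : ℕ) (hd : 1 ≤ d) (hk : 1 ≤ k)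
    (ε η : ℝ) (hε0 : 0 ≤ ε) (hε : ε ≤ ((2 : ℝ) ^ (k * d))⁻¹)
    (μ : Measure (EuclideanSpace ℝ (Fin d))) [IsProbabilityMeasure μ]
    (hsupp : μ (unitCube d) = 1)
    (hpor : DyadicMeanPorousWith μ k η ε) (C : AdmissibleChoice μ ε k) :
    ∀ᵐ x ∂μ, Filter.Tendsto (fun n : ℕ =>
      (1 / (n : ℝ)) * ∑ i ∈ Finset.range n,
        Set.indicator {i : ℕ | PorousCube μ ε k (levelSeq μ ε k C x i) x}
          (fun i => lyapPorous μ ε k C (levelSeq μ ε k C x i) x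
            - Real.log 2 * ((levelSeq μ ε k C x (i + 1) : ℝ) - (levelSeq μ ε k C x i : ℝ)))
          i)
      Filter.atTop (nhds 0) := by
  filter_upwards [S16.ae_tendsto_sq C hk] with x hx
  have hB0 : (0:ℝ) ≤ 2 * (k : ℝ) * Real.log 2 := by
    have := Real.log_nonneg (by norm_num : (1:ℝ) ≤ 2)
    positivity
  have hYb : ∀ i, |S16.Y μ ε k C i x| ≤ 2 * (k : ℝ) * Real.log 2 :=
    fun i => S16.Y_abs_le C hk i x
  have hmain := S16.tendsto_avg_of_sq hB0 hYb hx
  have heq : (fun n : ℕ =>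
      (1 / (n : ℝ)) * ∑ i ∈ Finset.range n,
        Set.indicator {i : ℕ | PorousCube μ ε k (levelSeq μ ε k C x i) x}
          (fun i => lyapPorous μ ε k C (levelSeq μ ε k C x i) x
            - Real.log 2 * ((levelSeq μ ε k C x (i + 1) : ℝ) - (levelSeq μ ε k C x i : ℝ)))
          i)
      = fun n : ℕ => (∑ i ∈ Finset.range n, S16.Y μ ε k C i x) / (n : ℝ) := by
    funext n
    rw [one_div, inv_mul_eq_div]
    rfl
  rw [heq]
  exact hmain
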